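/- The reachability order on process expressions modulo branching bisimilarity is a well-founded partial order: defining [P] ≥ [P'] iff some Q ∈ [P] reaches some Q' ∈ [P'] by transitions, the inverse relation ≤ (reflexive-transitive closure) is reflexive, transitive, antisymmetric, and well-founded. -/

import Mathlib

/-- Process expressions: inaction, prefix, choice, interleaving parallel composition,
and iteration prefix. Labels are `Option A`, with `none` playing the role of τ. -/
inductive PExp (A : Type) : Type
  | nil : PExp A
  | pre : Option A → PExp A → PExp A
  | choice : PExp A → PExp A → PExp A
  | par : PExp A → PExp A → PExp A
  | star : Option A → PExp A → PExp A

namespace PExp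

/-- The labelled transition relation. -/
inductive Step {A : Type} : PExp A → Option A → PExp A → Prop
  | pre (α : Option A) (P : PExp A) : Step (PExp.pre α P) α P
  | choiceL {P α P'} (Q) : Step P α P' → Step (PExp.choice P Q) α P'
  | choiceR {Q α Q'} (P) : Step Q α Q' → Step (PExp.choice P Q) α Q'
  | parL {P α P'} (Q) : Step P α P' → Step (PExp.par P Q) α (PExp.par P' Q)
  | parR {Q α Q'} (P) : Step Q α Q' → Step (PExp.par P Q) α (PExp.par P Q')
  | star (α : Option A) (P : PExp A) : Step (PExp.star α P) α (PExp.star α P)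
  | starStep {P β P'} (α) : Step P β P' → Step (PExp.star α P) β P'

/-- P ⇒ Q : zero or more τ-steps. -/
def TauSteps {A : Type} (P Q : PExp A) : Prop :=
  Relation.ReflTransGen (fun X Y => Step X none Y) P Q

/-- P (→α) Q or (α = τ and P = Q). -/
def OptStep {A : Type} (P : PExp A) (α : Option A) (P' : PExp A) : Prop :=
  Step P α P' ∨ (α = none ∧ P = P')

/-- R is a branching bisimulation. -/
def IsBranchingBisim {A : Type} (R : PExp A → PExp A → Prop) : Prop :=
  Symmetric R ∧ ∀ P Q, R P Q → ∀ α P', Step P α P' →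
    ∃ Q'' Q', TauSteps Q Q'' ∧ OptStep Q'' α Q' ∧ R P Q'' ∧ R P' Q'

/-- Branching bisimilarity. -/
def BBisim {A : Type} (P Q : PExp A) : Prop :=
  ∃ R, IsBranchingBisim R ∧ R P Q

/-- R is a weak bisimulation. -/
def IsWeakBisim {A : Type} (R : PExp A → PExp A → Prop) : Prop :=
  Symmetric R ∧ ∀ P Q, R P Q → ∀ α P', Step P α P' →
    ∃ Q'' Q''' Q', TauSteps Q Q'' ∧ OptStep Q'' α Q''' ∧ TauSteps Q''' Q' ∧ R P' Q'

/-- Weak bisimilarity. -/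
def WBisim {A : Type} (P Q : PExp A) : Prop :=
  ∃ R, IsWeakBisim R ∧ R P Q

/-- A step with some label. -/
def AnyStep {A : Type} (P Q : PExp A) : Prop := ∃ α, Step P α Q

/-- Reachability: reflexive-transitive closure of the one-step transition relation. -/
def Reaches {A : Type} : PExp A → PExp A → Prop := Relation.ReflTransGen AnyStep

/-- P has no outgoing transitions. -/
def Deadlock {A : Type} (P : PExp A) : Prop := ∀ α Q, ¬ Step P α Q

/-- P can reach a deadlocked expression. -/
def WeaklyNormed {A : Type} (P : PExp A) : Prop := ∃ P', Reaches P P' ∧ Deadlock P'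

/-- `NormWitness P k`: there is a complete transition sequence from P to a deadlocked
expression containing exactly k non-τ transitions. -/
inductive NormWitness {A : Type} : PExp A → ℕ → Prop
  | dead {P} : Deadlock P → NormWitness P 0
  | tau {P P' k} : Step P none P' → NormWitness P' k → NormWitness P k
  | act {P a P' k} : Step P (some a) P' → NormWitness P' k → NormWitness P (k + 1)

/-- The weak norm of P is k: k is the least number of non-τ transitions in a complete
transition sequence from P. -/
def IsWeakNorm {A : Type} (P : PExp A) (k : ℕ) : Prop :=
  NormWitness P k ∧ ∀ j, NormWitness P j → k ≤ j

/-- P ⇒a Q : a weak a-step (a ≠ τ), absorbing τ-steps on both sides. -/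
def WStep {A : Type} (P : PExp A) (a : A) (Q : PExp A) : Prop :=
  ∃ P₁ Q₁, TauSteps P P₁ ∧ Step P₁ (some a) Q₁ ∧ TauSteps Q₁ Q

/-- `WChain P k`: there is a sequence of k weak (non-τ) steps starting from P. -/
inductive WChain {A : Type} : PExp A → ℕ → Prop
  | zero (P) : WChain P 0
  | succ {P a P' k} : WStep P a P' → WChain P' k → WChain P (k + 1)

/-- P is weakly bounded: some k bounds the number of non-τ steps of every sequence. -/
def WeaklyBounded {A : Type} (P : PExp A) : Prop := ∃ k, ∀ l, WChain P l → l ≤ k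

/-- The weak depth of P is k: the length of a longest transition sequence from P not
counting τ-transitions. -/
def IsWeakDepth {A : Type} (P : PExp A) (k : ℕ) : Prop :=
  WChain P k ∧ ∀ l, WChain P l → l ≤ k

/-- Indecomposability with respect to a behavioural equivalence E: P is not equivalent
to 0 nor to a parallel composition of two processes not equivalent to 0. -/
def IndecompWith {A : Type} (E : PExp A → PExp A → Prop) (P : PExp A) : Prop :=
  ¬ E P PExp.nil ∧ ∀ Q R, E P (PExp.par Q R) → E Q PExp.nil ∨ E R PExp.nil

end PExp

open PExp

/-- The transition relation on branching-bisimilarity classes, on representatives: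
[P] → [P'] if some Q ∈ [P] steps to some Q' ∈ [P']. -/
def ClsStep {A : Type} (P P' : PExp A) : Prop :=
  ∃ Q Q' α, BBisim P Q ∧ BBisim P' Q' ∧ Step Q α Q'

/-- The reachability order on classes: [X] ≤ [Y] iff [Y] →* [X]. -/
def ClsLe {A : Type} (X Y : PExp A) : Prop :=
  Relation.ReflTransGen ClsStep Y X

namespace PExpAux
open PExp

variable {A : Type}

/-- Branching bisimilarity is reflexive. -/
lemma bbisim_refl (P : PExp A) : BBisim P P := by
  refine ⟨Eq, ⟨fun a b h => h.symm, ?_⟩, rfl⟩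
  rintro P Q rfl α P' h
  exact ⟨P, P', Relation.ReflTransGen.refl, Or.inl h, rfl, rfl⟩

lemma bbisim_symm {P Q : PExp A} (h : BBisim P Q) : BBisim Q P := by
  obtain ⟨R, hR, hPQ⟩ := h
  exact ⟨R, hR, hR.1 hPQ⟩

lemma tauSteps_reaches {P Q : PExp A} (h : TauSteps P Q) : Reaches P Q :=
  Relation.ReflTransGen.mono (r := fun X Y => Step X none Y) (p := AnyStep) (fun _ _ hs => ⟨none, hs⟩) P Q h

lemma optStep_reaches {P : PExp A} {α} {Q : PExp A} (h : OptStep P α Q) : Reaches P Q := by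
  rcases h with h | ⟨_, rfl⟩
  · exact Relation.ReflTransGen.single ⟨α, h⟩
  · exact Relation.ReflTransGen.refl

/-- transfer of a single step across a bisimulation -/
lemma bbisim_step_transfer {P Q : PExp A} {α} {P' : PExp A}
    (h : BBisim P Q) (hs : Step P α P') : ∃ Q', Reaches Q Q' ∧ BBisim P' Q' := by
  obtain ⟨R, hR, hPQ⟩ := h
  obtain ⟨Q'', Q', h1, h2, _, h4⟩ := hR.2 P Q hPQ α P' hs
  exact ⟨Q', (tauSteps_reaches h1).trans (optStep_reaches h2), ⟨R, hR, h4⟩⟩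

lemma bbisim_reaches_transfer {P Q P' : PExp A}
    (h : BBisim P Q) (hr : Reaches P P') : ∃ Q', Reaches Q Q' ∧ BBisim P' Q' := by
  induction hr with
  | refl => exact ⟨Q, Relation.ReflTransGen.refl, h⟩
  | tail _ hstep ih =>
    obtain ⟨Q₂, hQ₂, hb₂⟩ := ih
    obtain ⟨α, hstep⟩ := hstep
    obtain ⟨Q', hr', hb'⟩ := bbisim_step_transfer hb₂ hstep
    exact ⟨Q', hQ₂.trans hr', hb'⟩

/-- transfer of tau sequences inside a single bisimulation -/
lemma tau_transfer {R : PExp A → PExp A → Prop} (hR : IsBranchingBisim R)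
    {M S M'' : PExp A} (hMS : R M S) (ht : TauSteps M M'') :
    ∃ S'', TauSteps S S'' ∧ R M'' S'' := by
  induction ht with
  | refl => exact ⟨S, Relation.ReflTransGen.refl, hMS⟩
  | tail _ hstep ih =>
    obtain ⟨S₁, hS₁, hR₁⟩ := ih
    obtain ⟨Ta, Tb, h1, h2, _, h4⟩ := hR.2 _ _ hR₁ _ _ hstep
    rcases h2 with h2 | ⟨_, h2⟩
    · exact ⟨Tb, hS₁.trans (h1.trans (Relation.ReflTransGen.single h2)), h4⟩
    · exact ⟨Tb, hS₁.trans (h2 ▸ h1), h4⟩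

/-- composition transfer for transitivity -/
lemma comp_transfer {R1 R2 : PExp A → PExp A → Prop}
    (h1 : IsBranchingBisim R1) (h2 : IsBranchingBisim R2)
    {P M S : PExp A} (hPM : R1 P M) (hMS : R2 M S) {α} {P' : PExp A} (hs : Step P α P') :
    ∃ S'' S', TauSteps S S'' ∧ OptStep S'' α S' ∧
      (∃ z, R1 P z ∧ R2 z S'') ∧ (∃ z, R1 P' z ∧ R2 z S') := by
  obtain ⟨M'', M', hM1, hM2, hPM'', hP'M'⟩ := h1.2 P M hPM α P' hs
  obtain ⟨S'', hS'', hR2''⟩ := tau_transfer h2 hMS hM1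
  rcases hM2 with hM2 | ⟨rfl, rfl⟩
  · obtain ⟨T'', T', hT1, hT2, hRT'', hRT'⟩ := h2.2 _ _ hR2'' _ _ hM2
    exact ⟨T'', T', hS''.trans hT1, hT2, ⟨M'', hPM'', hRT''⟩, ⟨M', hP'M', hRT'⟩⟩
  · exact ⟨S'', S'', hS'', Or.inr ⟨rfl, rfl⟩, ⟨M'', hPM'', hR2''⟩, ⟨M'', hP'M', hR2''⟩⟩

lemma bbisim_trans {P Q S : PExp A} (hPQ : BBisim P Q) (hQS : BBisim Q S) : BBisim P S := by
  obtain ⟨R1, hR1, h1⟩ := hPQ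
  obtain ⟨R2, hR2, h2⟩ := hQS
  refine ⟨fun x y => (∃ z, R1 x z ∧ R2 z y) ∨ (∃ z, R2 x z ∧ R1 z y), ⟨?_, ?_⟩, Or.inl ⟨Q, h1, h2⟩⟩
  · rintro x y (⟨z, ha, hb⟩ | ⟨z, ha, hb⟩)
    · exact Or.inr ⟨z, hR2.1 hb, hR1.1 ha⟩
    · exact Or.inl ⟨z, hR1.1 hb, hR2.1 ha⟩
  · rintro P S (⟨M, ha, hb⟩ | ⟨M, ha, hb⟩) α P' hs
    · obtain ⟨S'', S', u1, u2, u3, u4⟩ := comp_transfer hR1 hR2 ha hb hs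
      exact ⟨S'', S', u1, u2, Or.inl u3, Or.inl u4⟩
    · obtain ⟨S'', S', u1, u2, u3, u4⟩ := comp_transfer hR2 hR1 ha hb hs
      exact ⟨S'', S', u1, u2, Or.inr u3, Or.inr u4⟩

/-- size measure -/
def msr : PExp A → ℕ
  | PExp.nil => 0
  | PExp.pre _ P => msr P + 1
  | PExp.choice P Q => msr P + msr Q + 1
  | PExp.par P Q => msr P + msr Q + 1
  | PExp.star _ P => msr P + 1

lemma step_msr {P : PExp A} {α} {P' : PExp A} (h : Step P α P') :
    msr P' < msr P ∨ P' = P := by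
  induction h with
  | pre α P => left; simp [msr]
  | choiceL Q _ ih =>
    left
    rcases ih with h | rfl
    · calc msr _ < msr _ := h
        _ ≤ _ := by simp [msr]; omega
    · simp [msr]
  | choiceR P _ ih =>
    left
    rcases ih with h | rfl
    · calc msr _ < msr _ := h
        _ ≤ _ := by simp [msr]; omega
    · simp [msr]
  | parL Q _ ih =>
    rcases ih with h | rfl
    · left; simp [msr]; omega
    · right; rfl
  | parR P _ ih =>
    rcases ih with h | rfl
    · left; simp [msr]; omega
    · right; rfl
  | star α P => right; rfl
  | starStep α _ ih =>
    left
    rcases ih with h | rfl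
    · calc msr _ < msr _ := h
        _ ≤ _ := by simp [msr]
    · simp [msr]

lemma reaches_msr {P Q : PExp A} (h : Reaches P Q) :
    msr Q ≤ msr P ∧ (msr Q = msr P → Q = P) := by
  induction h using Relation.ReflTransGen.head_induction_on with
  | refl => exact ⟨le_refl _, fun _ => rfl⟩
  | head hstep _ ih =>
    obtain ⟨α, hstep⟩ := hstep
    rcases step_msr hstep with hlt | rfl
    · exact ⟨le_trans ih.1 (le_of_lt hlt), fun he => absurd he (by omega)⟩
    · exact ih

lemma reaches_ne_lt {P Q : PExp A} (h : Reaches P Q) (hne : Q ≠ P) : msr Q < msr P := by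
  rcases lt_or_eq_of_le (reaches_msr h).1 with h' | h'
  · exact h'
  · exact absurd ((reaches_msr h).2 h') hne

/-- key lemma: ClsLe gives reachability to a bisimilar representative -/
lemma clsle_rep {X Y : PExp A} (h : ClsLe X Y) :
    ∃ X₁, Reaches Y X₁ ∧ BBisim X X₁ := by
  induction h with
  | refl => exact ⟨Y, Relation.ReflTransGen.refl, bbisim_refl Y⟩
  | tail _ hcs ih =>
    obtain ⟨Z₁, hr, hb⟩ := ih
    obtain ⟨Q, Q', α, hZQ, hXQ', hstep⟩ := hcs
    have hQZ₁ : BBisim Q Z₁ := bbisim_trans (bbisim_symm hZQ) hb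
    obtain ⟨W, hrW, hbW⟩ := bbisim_step_transfer hQZ₁ hstep
    exact ⟨W, hr.trans hrW, bbisim_trans hXQ' hbW⟩

lemma clsstep_congr_left {Y Y' Z : PExp A} (hb : BBisim Y' Y) (h : ClsStep Y Z) :
    ClsStep Y' Z := by
  obtain ⟨Q, Q', α, h1, h2, h3⟩ := h
  exact ⟨Q, Q', α, bbisim_trans hb h1, h2, h3⟩

lemma clsstep_congr_right {Y Z Z' : PExp A} (hb : BBisim Z' Z) (h : ClsStep Y Z) :
    ClsStep Y Z' := by
  obtain ⟨Q, Q', α, h1, h2, h3⟩ := h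
  exact ⟨Q, Q', α, h1, bbisim_trans hb h2, h3⟩

/-- replace the greater element by a bisimilar one (unless the chain is empty) -/
lemma clsle_congr_top {X Y Y' : PExp A} (h : ClsLe X Y) (hb : BBisim Y' Y) :
    X = Y ∨ ClsLe X Y' := by
  rcases (Relation.ReflTransGen.cases_head h) with rfl | ⟨Z, hYZ, hZX⟩
  · exact Or.inl rfl
  · exact Or.inr (Relation.ReflTransGen.head (clsstep_congr_left hb hYZ) hZX)

/-- replace the smaller element by a bisimilar one (unless the chain is empty) -/
lemma clsle_congr_bot {X X' Y : PExp A} (h : ClsLe X Y) (hb : BBisim X' X) :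
    X = Y ∨ ClsLe X' Y := by
  induction h with
  | refl => exact Or.inl rfl
  | tail hYZ hZX _ =>
    exact Or.inr (Relation.ReflTransGen.tail hYZ (clsstep_congr_right hb hZX))

lemma antisym_aux : ∀ n : ℕ, ∀ Y X : PExp A, msr Y ≤ n →
    ClsLe X Y → ClsLe Y X → BBisim X Y := by
  intro n
  induction n with
  | zero =>
    intro Y X hm hXY hYX
    by_cases hXeq : X = Y
    · subst hXeq; exact bbisim_refl X
    obtain ⟨X₁, hrX₁, hbX₁⟩ := clsle_rep hXY
    obtain ⟨Y₁, hrY₁, hbY₁⟩ := clsle_rep hYX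
    obtain ⟨Y₁', hrY₁', hbY₁'⟩ := bbisim_reaches_transfer hbX₁ hrY₁
    have hbYY₁' : BBisim Y Y₁' := bbisim_trans hbY₁ hbY₁'
    have hrYY₁' : Reaches Y Y₁' := hrX₁.trans hrY₁'
    by_cases hY1 : Y₁' = Y
    · subst hY1
      have hX₁Y : X₁ = Y₁' := by
        by_contra hne
        have h1 := reaches_ne_lt hrY₁' (fun he => hne he.symm)
        have h2 := reaches_ne_lt hrX₁ hne
        omega
      exact hX₁Y ▸ hbX₁
    · have := reaches_ne_lt hrYY₁' hY1
      omega
  | succ n ih =>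
    intro Y X hm hXY hYX
    by_cases hXeq : X = Y
    · subst hXeq; exact bbisim_refl X
    obtain ⟨X₁, hrX₁, hbX₁⟩ := clsle_rep hXY
    obtain ⟨Y₁, hrY₁, hbY₁⟩ := clsle_rep hYX
    obtain ⟨Y₁', hrY₁', hbY₁'⟩ := bbisim_reaches_transfer hbX₁ hrY₁
    have hbYY₁' : BBisim Y Y₁' := bbisim_trans hbY₁ hbY₁'
    have hrYY₁' : Reaches Y Y₁' := hrX₁.trans hrY₁'
    by_cases hY1 : Y₁' = Y
    · subst hY1
      have hX₁Y : X₁ = Y₁' := by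
        by_contra hne
        have h1 := reaches_ne_lt hrY₁' (fun he => hne he.symm)
        have h2 := reaches_ne_lt hrX₁ hne
        omega
      exact hX₁Y ▸ hbX₁
    · have hlt := reaches_ne_lt hrYY₁' hY1
      have hXle : ClsLe X Y₁' := by
        rcases clsle_congr_top hXY (bbisim_symm hbYY₁') with rfl | h
        · exact absurd rfl hXeq
        · exact h
      have hYle : ClsLe Y₁' X := by
        rcases clsle_congr_bot hYX (bbisim_symm hbYY₁') with rfl | h
        · exact absurd rfl (fun h => hXeq h.symm) -- Y = X case
        · exact h
      have := ih Y₁' X (by omega) hXle hYle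
      exact bbisim_trans this (bbisim_symm hbYY₁')

lemma wf_aux : ∀ n : ℕ, ∀ Y : PExp A, msr Y ≤ n →
    Acc (fun X Y : PExp A => ClsLe X Y ∧ ¬ BBisim X Y) Y := by
  intro n
  induction n with
  | zero =>
    intro Y hm
    refine Acc.intro Y ?_
    rintro X ⟨hle, hnb⟩
    obtain ⟨X₁, hr, hb⟩ := clsle_rep hle
    have hne : X₁ ≠ Y := fun he => hnb (he ▸ hb)
    have := reaches_ne_lt hr hne
    omega
  | succ n ih =>
    intro Y hm
    refine Acc.intro Y ?_
    rintro X ⟨hle, hnb⟩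
    obtain ⟨X₁, hr, hb⟩ := clsle_rep hle
    have hne : X₁ ≠ Y := fun he => hnb (he ▸ hb)
    have hlt := reaches_ne_lt hr hne
    have hacc : Acc (fun X Y : PExp A => ClsLe X Y ∧ ¬ BBisim X Y) X₁ := ih X₁ (by omega)
    refine Acc.intro X ?_
    rintro W ⟨hle', hnb'⟩
    have hWX₁ : ClsLe W X₁ := by
      rcases clsle_congr_top hle' (bbisim_symm hb) with rfl | h
      · exact absurd (bbisim_refl W) hnb'
      · exact h
    have hnbWX₁ : ¬ BBisim W X₁ := fun h => hnb' (bbisim_trans h (bbisim_symm hb))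
    exact hacc.inv ⟨hWX₁, hnbWX₁⟩

end PExpAux

/-- The reachability order on process expressions modulo branching bisimilarity is a
well-founded partial order: reflexive, transitive, antisymmetric (up to branching
bisimilarity), and well-founded. -/
theorem cls_reachability_wf_partial_order (A : Type) :
    (∀ X : PExp A, ClsLe X X) ∧
    (∀ X Y Z : PExp A, ClsLe X Y → ClsLe Y Z → ClsLe X Z) ∧
    (∀ X Y : PExp A, ClsLe X Y → ClsLe Y X → BBisim X Y) ∧
    WellFounded (fun X Y : PExp A => ClsLe X Y ∧ ¬ BBisim X Y) := by
  refine ⟨fun X => Relation.ReflTransGen.refl, fun X Y Z h1 h2 => h2.trans h1,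
    fun X Y h1 h2 => PExpAux.antisym_aux (PExpAux.msr Y) Y X (le_refl _) h1 h2,
    WellFounded.intro fun Y => PExpAux.wf_aux (PExpAux.msr Y) Y (le_refl _)⟩
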